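/- Let D ⊂ ℝⁿ be a bounded strictly convex domain with R = max_{p ∈ D} r(p). Then the set I_D of points of maximum inaccessibility is either a single point or a nondegenerate closed segment. -/

import Mathlib

open scoped RealInnerProductSpace
open Metric MeasureTheory

/-- For a point `p` and a unit vector `v`, the length of the connected component of
`(p + ℝ v) ∩ D` containing `p`, computed as the Lebesgue measure of the corresponding
set of parameters `t` (its connected component containing `0`). -/
noncomputable def segLen {n : ℕ} (D : Set (EuclideanSpace ℝ (Fin n)))
    (p v : EuclideanSpace ℝ (Fin n)) : ℝ :=
  (volume (connectedComponentIn {t : ℝ | p + t • v ∈ D} 0)).toReal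

/-- Inaccessibility of `p` in `D`: the infimum (a minimum, by lower semicontinuity)
of `f_p` over the unit sphere. -/
noncomputable def inacc {n : ℕ} (D : Set (EuclideanSpace ℝ (Fin n)))
    (p : EuclideanSpace ℝ (Fin n)) : ℝ :=
  sInf (segLen D p '' sphere (0 : EuclideanSpace ℝ (Fin n)) 1)

/-- `E_r`: the closure of the set of points of `D` with inaccessibility at least `r`. -/
noncomputable def Eset {n : ℕ} (D : Set (EuclideanSpace ℝ (Fin n))) (r : ℝ) :
    Set (EuclideanSpace ℝ (Fin n)) :=
  closure {p | p ∈ D ∧ r ≤ inacc D p}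

/-- The inaccessibility `R` of `D`: the supremum (for convex `D`, the maximum) of the
inaccessibility function on `D`. -/
noncomputable def Rmax {n : ℕ} (D : Set (EuclideanSpace ℝ (Fin n))) : ℝ :=
  sSup (inacc D '' D)

/-- `I_D = ⋂_{r < R} E_r`, the set of points of maximum inaccessibility. -/
noncomputable def maxInaccSet {n : ℕ} (D : Set (EuclideanSpace ℝ (Fin n))) :
    Set (EuclideanSpace ℝ (Fin n)) :=
  ⋂ r ∈ Set.Iio (Rmax D), Eset D r

namespace MaxInacc

variable {n : ℕ} {D : Set (EuclideanSpace ℝ (Fin n))} {p q v : EuclideanSpace ℝ (Fin n)}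
  {M : ℝ}

/-- The set of parameters of the chord through `p` in direction `v`. -/
def chord (D : Set (EuclideanSpace ℝ (Fin n))) (p v : EuclideanSpace ℝ (Fin n)) : Set ℝ :=
  {t : ℝ | p + t • v ∈ D}

theorem chord_convex (hConv : Convex ℝ D) : Convex ℝ (chord D p v) := by
  intro t1 h1 t2 h2 a b ha hb hab
  have key : p + (a • t1 + b • t2) • v = a • (p + t1 • v) + b • (p + t2 • v) := by
    simp only [smul_eq_mul]
    match_scalars <;> simp [hab] <;> ring
  show p + _ • v ∈ D
  rw [key]
  exact hConv h1 h2 ha hb hab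

theorem chord_isOpen (hOpen : IsOpen D) : IsOpen (chord D p v) :=
  hOpen.preimage (continuous_const.add (continuous_id.smul continuous_const))

theorem zero_mem_chord (hp : p ∈ D) : (0 : ℝ) ∈ chord D p v := by
  simp [chord, hp]

theorem chord_subset_Icc (hM : D ⊆ closedBall 0 M) (hv : ‖v‖ = 1) :
    chord D p v ⊆ Set.Icc (-(M + ‖p‖)) (M + ‖p‖) := by
  intro t ht
  have h1 : ‖p + t • v‖ ≤ M := by simpa [mem_closedBall, dist_eq_norm] using hM ht
  have h2 : |t| = ‖t • v‖ := by rw [norm_smul, hv, mul_one, Real.norm_eq_abs]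
  have h3 : ‖t • v‖ ≤ ‖p + t • v‖ + ‖p‖ := by
    have h := norm_sub_le (p + t • v) p
    simpa using h
  have habs : |t| ≤ M + ‖p‖ := by rw [h2]; linarith
  exact abs_le.1 habs

theorem chord_bddAbove (hM : D ⊆ closedBall 0 M) (hv : ‖v‖ = 1) : BddAbove (chord D p v) :=
  ⟨M + ‖p‖, fun t ht => (chord_subset_Icc hM hv ht).2⟩

theorem chord_bddBelow (hM : D ⊆ closedBall 0 M) (hv : ‖v‖ = 1) : BddBelow (chord D p v) :=
  ⟨-(M + ‖p‖), fun t ht => (chord_subset_Icc hM hv ht).1⟩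

theorem chord_nonempty (hp : p ∈ D) : (chord D p v).Nonempty := ⟨0, zero_mem_chord hp⟩

theorem chord_eq_Ioo (hOpen : IsOpen D) (hConv : Convex ℝ D) (hp : p ∈ D)
    (hM : D ⊆ closedBall 0 M) (hv : ‖v‖ = 1) :
    chord D p v = Set.Ioo (sInf (chord D p v)) (sSup (chord D p v)) := by
  have hne := chord_nonempty (v := v) hp
  have hba := chord_bddAbove (p := p) hM hv
  have hbb := chord_bddBelow (p := p) hM hv
  ext t
  constructor
  · intro ht
    obtain ⟨ε, hε, hball⟩ := Metric.isOpen_iff.1 (chord_isOpen hOpen) t ht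
    constructor
    · have h1 : t - ε / 2 ∈ chord D p v := by
        apply hball
        rw [mem_ball, Real.dist_eq, show t - ε / 2 - t = -(ε/2) by ring, abs_neg,
          abs_of_nonneg (by linarith)]
        linarith
      have := csInf_le hbb h1
      linarith
    · have h1 : t + ε / 2 ∈ chord D p v := by
        apply hball
        rw [mem_ball, Real.dist_eq, show t + ε / 2 - t = ε/2 by ring,
          abs_of_nonneg (by linarith)]
        linarith
      have := le_csSup hba h1
      linarith
  · rintro ⟨h1, h2⟩
    obtain ⟨t1, ht1, ht1'⟩ := exists_lt_of_csInf_lt hne h1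
    obtain ⟨t2, ht2, ht2'⟩ := exists_lt_of_lt_csSup hne h2
    exact (chord_convex hConv).ordConnected.out ht1 ht2 ⟨ht1'.le, ht2'.le⟩

theorem sInf_le_csSup_chord (hp : p ∈ D) (hM : D ⊆ closedBall 0 M) (hv : ‖v‖ = 1) :
    sInf (chord D p v) ≤ sSup (chord D p v) :=
  csInf_le_csSup (chord_nonempty hp) (chord_bddBelow hM hv) (chord_bddAbove hM hv)

theorem segLen_eq (hOpen : IsOpen D) (hConv : Convex ℝ D) (hp : p ∈ D)
    (hM : D ⊆ closedBall 0 M) (hv : ‖v‖ = 1) :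
    segLen D p v = sSup (chord D p v) - sInf (chord D p v) := by
  have h0 : connectedComponentIn (chord D p v) 0 = chord D p v :=
    ((chord_convex hConv).isPreconnected).connectedComponentIn (zero_mem_chord hp)
  have hvol : volume (chord D p v) =
      ENNReal.ofReal (sSup (chord D p v) - sInf (chord D p v)) := by
    conv_lhs => rw [chord_eq_Ioo hOpen hConv hp hM hv]
    rw [Real.volume_Ioo]
  rw [segLen, show {t : ℝ | p + t • v ∈ D} = chord D p v from rfl, h0, hvol,
    ENNReal.toReal_ofReal (by linarith [sInf_le_csSup_chord hp hM hv])]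

theorem segLen_nonneg : 0 ≤ segLen D p v := ENNReal.toReal_nonneg

theorem segLen_ge_of_ball {ε : ℝ} (hOpen : IsOpen D) (hConv : Convex ℝ D) (hp : p ∈ D)
    (hM : D ⊆ closedBall 0 M) (hv : ‖v‖ = 1) (hball : ball p ε ⊆ D) (hε : 0 < ε) :
    ε ≤ segLen D p v := by
  have hmem : ∀ t : ℝ, |t| < ε → t ∈ chord D p v := by
    intro t ht
    apply hball
    rw [mem_ball, dist_eq_norm]
    have : p + t • v - p = t • v := by abel
    rw [this, norm_smul, hv, mul_one, Real.norm_eq_abs]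
    exact ht
  have h1 : ε / 2 ≤ sSup (chord D p v) := by
    apply le_csSup (chord_bddAbove hM hv)
    apply hmem; rw [abs_of_nonneg (by linarith)]; linarith
  have h2 : sInf (chord D p v) ≤ -(ε / 2) := by
    apply csInf_le (chord_bddBelow hM hv)
    apply hmem; rw [abs_of_nonpos (by linarith)]; linarith
  rw [segLen_eq hOpen hConv hp hM hv]
  linarith

theorem segLen_le (hOpen : IsOpen D) (hConv : Convex ℝ D) (hp : p ∈ D)
    (hM : D ⊆ closedBall 0 M) (hv : ‖v‖ = 1) :
    segLen D p v ≤ 2 * (M + ‖p‖) := by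
  have h1 : sSup (chord D p v) ≤ M + ‖p‖ :=
    csSup_le (chord_nonempty hp) fun t ht => (chord_subset_Icc hM hv ht).2
  have h2 : -(M + ‖p‖) ≤ sInf (chord D p v) :=
    le_csInf (chord_nonempty hp) fun t ht => (chord_subset_Icc hM hv ht).1
  rw [segLen_eq hOpen hConv hp hM hv]
  linarith

theorem mem_chord_combo (hConv : Convex ℝ D) {t1 t2 a b : ℝ}
    (h1 : t1 ∈ chord D p v) (h2 : t2 ∈ chord D q v) (ha : 0 ≤ a) (hb : 0 ≤ b)
    (hab : a + b = 1) : a * t1 + b * t2 ∈ chord D (a • p + b • q) v := by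
  have key : (a • p + b • q) + (a * t1 + b * t2) • v = a • (p + t1 • v) + b • (q + t2 • v) := by
    match_scalars <;> simp [hab] <;> ring
  show _ + _ • v ∈ D
  rw [key]
  exact hConv h1 h2 ha hb hab

theorem csSup_chord_combo (hConv : Convex ℝ D) (hp : p ∈ D) (hq : q ∈ D)
    (hM : D ⊆ closedBall 0 M) (hv : ‖v‖ = 1) {a b : ℝ} (ha : 0 ≤ a) (hb : 0 ≤ b)
    (hab : a + b = 1) :
    a * sSup (chord D p v) + b * sSup (chord D q v) ≤ sSup (chord D (a • p + b • q) v) := by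
  have hmem : a • p + b • q ∈ D := hConv hp hq ha hb hab
  have hba3 := chord_bddAbove (p := a • p + b • q) (v := v) hM hv
  refine le_of_forall_sub_le fun ε hε => ?_
  obtain ⟨t1, ht1, ht1'⟩ := exists_lt_of_lt_csSup (chord_nonempty (v := v) hp)
    (show sSup (chord D p v) - ε < _ by linarith)
  obtain ⟨t2, ht2, ht2'⟩ := exists_lt_of_lt_csSup (chord_nonempty (v := v) hq)
    (show sSup (chord D q v) - ε < _ by linarith)
  have hm := le_csSup hba3 (mem_chord_combo hConv ht1 ht2 ha hb hab)
  nlinarith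

theorem csInf_chord_combo (hConv : Convex ℝ D) (hp : p ∈ D) (hq : q ∈ D)
    (hM : D ⊆ closedBall 0 M) (hv : ‖v‖ = 1) {a b : ℝ} (ha : 0 ≤ a) (hb : 0 ≤ b)
    (hab : a + b = 1) :
    sInf (chord D (a • p + b • q) v) ≤ a * sInf (chord D p v) + b * sInf (chord D q v) := by
  have hmem : a • p + b • q ∈ D := hConv hp hq ha hb hab
  have hbb3 := chord_bddBelow (p := a • p + b • q) (v := v) hM hv
  refine le_of_forall_pos_le_add fun ε hε => ?_
  obtain ⟨t1, ht1, ht1'⟩ := exists_lt_of_csInf_lt (chord_nonempty (v := v) hp)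
    (show _ < sInf (chord D p v) + ε by linarith)
  obtain ⟨t2, ht2, ht2'⟩ := exists_lt_of_csInf_lt (chord_nonempty (v := v) hq)
    (show _ < sInf (chord D q v) + ε by linarith)
  have hm := csInf_le hbb3 (mem_chord_combo hConv ht1 ht2 ha hb hab)
  nlinarith

theorem segLen_combo (hOpen : IsOpen D) (hConv : Convex ℝ D) (hp : p ∈ D) (hq : q ∈ D)
    (hM : D ⊆ closedBall 0 M) (hv : ‖v‖ = 1) {a b : ℝ} (ha : 0 ≤ a) (hb : 0 ≤ b)
    (hab : a + b = 1) :
    a * segLen D p v + b * segLen D q v ≤ segLen D (a • p + b • q) v := by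
  have hmem : a • p + b • q ∈ D := hConv hp hq ha hb hab
  rw [segLen_eq hOpen hConv hp hM hv, segLen_eq hOpen hConv hq hM hv,
    segLen_eq hOpen hConv hmem hM hv]
  have h1 := csSup_chord_combo hConv hp hq hM hv ha hb hab
  have h2 := csInf_chord_combo hConv hp hq hM hv ha hb hab
  ring_nf
  ring_nf at h1 h2
  linarith

theorem sphere_nonempty_of_pos (hn : 0 < n) :
    (sphere (0 : EuclideanSpace ℝ (Fin n)) 1).Nonempty := by
  refine ⟨EuclideanSpace.single ⟨0, hn⟩ (1 : ℝ), ?_⟩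
  simp [EuclideanSpace.norm_single]

theorem segLen_mem_inacc_image (hv : v ∈ sphere (0 : EuclideanSpace ℝ (Fin n)) 1) :
    segLen D p v ∈ segLen D p '' sphere (0 : EuclideanSpace ℝ (Fin n)) 1 :=
  Set.mem_image_of_mem _ hv

theorem inacc_bddBelow :
    BddBelow (segLen D p '' sphere (0 : EuclideanSpace ℝ (Fin n)) 1) :=
  ⟨0, by rintro x ⟨v, -, rfl⟩; exact segLen_nonneg⟩

theorem inacc_le_segLen (hv : v ∈ sphere (0 : EuclideanSpace ℝ (Fin n)) 1) :
    inacc D p ≤ segLen D p v :=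
  csInf_le inacc_bddBelow (segLen_mem_inacc_image hv)

theorem inacc_nonneg : 0 ≤ inacc D p := by
  rcases Set.eq_empty_or_nonempty
      (segLen D p '' sphere (0 : EuclideanSpace ℝ (Fin n)) 1) with h | h
  · rw [inacc, h, Real.sInf_empty]
  · exact le_csInf h (by rintro x ⟨v, -, rfl⟩; exact segLen_nonneg)

theorem le_inacc (hsph : (sphere (0 : EuclideanSpace ℝ (Fin n)) 1).Nonempty) {c : ℝ}
    (h : ∀ v ∈ sphere (0 : EuclideanSpace ℝ (Fin n)) 1, c ≤ segLen D p v) :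
    c ≤ inacc D p :=
  le_csInf (hsph.image _) (by rintro x ⟨v, hv, rfl⟩; exact h v hv)

theorem norm_of_mem_sphere (hv : v ∈ sphere (0 : EuclideanSpace ℝ (Fin n)) 1) : ‖v‖ = 1 := by
  simpa using hv

theorem inacc_ge_of_ball {ε : ℝ} (hOpen : IsOpen D) (hConv : Convex ℝ D) (hp : p ∈ D)
    (hM : D ⊆ closedBall 0 M) (hsph : (sphere (0 : EuclideanSpace ℝ (Fin n)) 1).Nonempty)
    (hball : ball p ε ⊆ D) (hε : 0 < ε) : ε ≤ inacc D p :=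
  le_inacc hsph fun v hv =>
    segLen_ge_of_ball hOpen hConv hp hM (norm_of_mem_sphere hv) hball hε

theorem inacc_le_bound (hOpen : IsOpen D) (hConv : Convex ℝ D) (hp : p ∈ D)
    (hM : D ⊆ closedBall 0 M)
    (hsph : (sphere (0 : EuclideanSpace ℝ (Fin n)) 1).Nonempty) :
    inacc D p ≤ 2 * (M + M) := by
  obtain ⟨v, hv⟩ := hsph
  refine (inacc_le_segLen hv).trans ?_
  refine (segLen_le hOpen hConv hp hM (norm_of_mem_sphere hv)).trans ?_
  have : ‖p‖ ≤ M := by simpa [dist_eq_norm] using hM hp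
  linarith

theorem inacc_combo (hOpen : IsOpen D) (hConv : Convex ℝ D) (hp : p ∈ D) (hq : q ∈ D)
    (hM : D ⊆ closedBall 0 M)
    (hsph : (sphere (0 : EuclideanSpace ℝ (Fin n)) 1).Nonempty) {a b : ℝ} (ha : 0 ≤ a)
    (hb : 0 ≤ b) (hab : a + b = 1) :
    a * inacc D p + b * inacc D q ≤ inacc D (a • p + b • q) := by
  refine le_inacc hsph fun v hv => ?_
  have h1 := segLen_combo hOpen hConv hp hq hM (norm_of_mem_sphere hv) ha hb hab
  have h2 := inacc_le_segLen (D := D) (p := p) hv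
  have h3 := inacc_le_segLen (D := D) (p := q) hv
  nlinarith

theorem segLen_lsc (hOpen : IsOpen D) (hConv : Convex ℝ D) (hp : p ∈ D)
    (hM : D ⊆ closedBall 0 M) {w : EuclideanSpace ℝ (Fin n)} (hw : ‖w‖ = 1) {c : ℝ}
    (hc : c < segLen D p w) :
    ∀ᶠ v in nhds w, ‖v‖ = 1 → c < segLen D p v := by
  rcases lt_or_ge c 0 with hc0 | hc0
  · exact Filter.Eventually.of_forall fun v _ => lt_of_lt_of_le hc0 segLen_nonneg
  · set a := sInf (chord D p w) with ha
    set b := sSup (chord D p w) with hb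
    have hfw : segLen D p w = b - a := segLen_eq hOpen hConv hp hM hw
    have hba : c < b - a := by rw [hfw] at hc; exact hc
    set δ := (b - a - c) / 3 with hδ
    have hδ0 : 0 < δ := by simp only [hδ]; linarith
    have hδba : δ < b - a := by simp only [hδ]; linarith
    set t1 := a + δ with ht1def
    set t2 := b - δ with ht2def
    have ht12 : c < t2 - t1 := by simp only [ht1def, ht2def, hδ]; linarith
    have hmem1 : t1 ∈ chord D p w := by
      rw [chord_eq_Ioo hOpen hConv hp hM hw]
      exact ⟨by simp only [ht1def]; linarith, by simp only [ht1def]; linarith⟩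
    have hmem2 : t2 ∈ chord D p w := by
      rw [chord_eq_Ioo hOpen hConv hp hM hw]
      exact ⟨by simp only [ht2def]; linarith, by simp only [ht2def]; linarith⟩
    have hcont1 : ContinuousAt (fun v : EuclideanSpace ℝ (Fin n) => p + t1 • v) w :=
      (continuous_const.add (continuous_id.const_smul t1)).continuousAt
    have hcont2 : ContinuousAt (fun v : EuclideanSpace ℝ (Fin n) => p + t2 • v) w :=
      (continuous_const.add (continuous_id.const_smul t2)).continuousAt
    have hev1 : ∀ᶠ v in nhds w, p + t1 • v ∈ D := hcont1.eventually_mem (hOpen.mem_nhds hmem1)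
    have hev2 : ∀ᶠ v in nhds w, p + t2 • v ∈ D := hcont2.eventually_mem (hOpen.mem_nhds hmem2)
    filter_upwards [hev1, hev2] with v h1 h2 hv
    have hle1 : sInf (chord D p v) ≤ t1 := csInf_le (chord_bddBelow hM hv) h1
    have hle2 : t2 ≤ sSup (chord D p v) := le_csSup (chord_bddAbove hM hv) h2
    rw [segLen_eq hOpen hConv hp hM hv]
    linarith

theorem exists_min_dir (hOpen : IsOpen D) (hConv : Convex ℝ D) (hp : p ∈ D)
    (hM : D ⊆ closedBall 0 M) (hn : 0 < n) :
    ∃ v ∈ sphere (0 : EuclideanSpace ℝ (Fin n)) 1, segLen D p v = inacc D p := by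
  have hsph := sphere_nonempty_of_pos (n := n) hn
  set m := inacc D p with hm
  set K : ℕ → Set (EuclideanSpace ℝ (Fin n)) :=
    fun k => {v | v ∈ sphere (0 : EuclideanSpace ℝ (Fin n)) 1 ∧
      segLen D p v ≤ m + 1 / (k + 1)} with hK
  have hKsub : ∀ k, K k ⊆ sphere (0 : EuclideanSpace ℝ (Fin n)) 1 := fun k v hv => hv.1
  have hKclosed : ∀ k, IsClosed (K k) := by
    intro k
    rw [← isOpen_compl_iff, isOpen_iff_mem_nhds]
    intro v hv
    by_cases hvs : v ∈ sphere (0 : EuclideanSpace ℝ (Fin n)) 1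
    · have hlt : m + 1 / (k + 1) < segLen D p v := by
        by_contra hcon
        exact hv ⟨hvs, le_of_not_gt hcon⟩
      have := segLen_lsc hOpen hConv hp hM (norm_of_mem_sphere hvs) hlt
      refine Filter.mem_of_superset this ?_
      intro u hu hmem
      exact absurd hmem.2 (not_le.2 (hu (norm_of_mem_sphere hmem.1)))
    · have : (sphere (0 : EuclideanSpace ℝ (Fin n)) 1)ᶜ ∈ nhds v :=
        (isClosed_sphere).isOpen_compl.mem_nhds hvs
      exact Filter.mem_of_superset this fun u hu hmem => hu hmem.1
  have hKcompact : ∀ k, IsCompact (K k) := fun k =>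
    (isCompact_sphere (0 : EuclideanSpace ℝ (Fin n)) 1).of_isClosed_subset (hKclosed k)
      (hKsub k)
  have hKne : ∀ k, (K k).Nonempty := by
    intro k
    have hpos : (0:ℝ) < 1 / (k + 1) := by positivity
    have hlt : inacc D p < m + 1 / (k+1) := by rw [← hm]; linarith
    rw [inacc] at hlt
    obtain ⟨x, hx, hxlt⟩ := exists_lt_of_csInf_lt (hsph.image (segLen D p)) hlt
    obtain ⟨v, hv, rfl⟩ := hx
    exact ⟨v, hv, hxlt.le⟩
  have hmono : ∀ i j : ℕ, i ≤ j → (1:ℝ) / (j + 1) ≤ 1 / (i + 1) := by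
    intro i j hij
    apply one_div_le_one_div_of_le (by positivity)
    have : (i:ℝ) ≤ j := Nat.cast_le.2 hij
    linarith
  have hKdir : Directed (· ⊇ ·) K := by
    intro i j
    refine ⟨max i j, fun v hv => ⟨hv.1, hv.2.trans ?_⟩, fun v hv => ⟨hv.1, hv.2.trans ?_⟩⟩
    · have := hmono i (max i j) (le_max_left i j); linarith
    · have := hmono j (max i j) (le_max_right i j); linarith
  obtain ⟨v, hvmem⟩ := IsCompact.nonempty_iInter_of_directed_nonempty_isCompact_isClosed
    K hKdir hKne hKcompact hKclosed
  simp only [Set.mem_iInter] at hvmem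
  have hvs := (hvmem 0).1
  refine ⟨v, hvs, le_antisymm ?_ (inacc_le_segLen hvs)⟩
  show segLen D p v ≤ m
  refine le_of_forall_pos_le_add fun ε hε => ?_
  obtain ⟨k, hk⟩ := exists_nat_one_div_lt hε
  exact ((hvmem k).2).trans (by linarith)

theorem chordEnd_inf_mem_frontier (hOpen : IsOpen D) (hConv : Convex ℝ D) (hp : p ∈ D)
    (hM : D ⊆ closedBall 0 M) (hv : ‖v‖ = 1) :
    p + (sInf (chord D p v)) • v ∈ frontier D := by
  have hg : Continuous fun t : ℝ => p + t • v :=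
    continuous_const.add (continuous_id.smul continuous_const)
  have h1 : p + (sInf (chord D p v)) • v ∈ closure D := by
    have hmem : sInf (chord D p v) ∈ closure (chord D p v) :=
      csInf_mem_closure (chord_nonempty hp) (chord_bddBelow hM hv)
    have himg : (fun t : ℝ => p + t • v) '' closure (chord D p v) ⊆ closure D := by
      refine (image_closure_subset_closure_image hg).trans (closure_mono ?_)
      rintro x ⟨t, ht, rfl⟩
      exact ht
    exact himg ⟨_, hmem, rfl⟩
  have h2 : p + (sInf (chord D p v)) • v ∉ D := by
    intro hcon
    have h3 : sInf (chord D p v) ∈ Set.Ioo (sInf (chord D p v)) (sSup (chord D p v)) := by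
      rw [← chord_eq_Ioo hOpen hConv hp hM hv]; exact hcon
    exact lt_irrefl _ h3.1
  rw [frontier, hOpen.interior_eq]
  exact ⟨h1, h2⟩

set_option maxHeartbeats 1000000 in
theorem inacc_ge_closure {r : ℝ} (hOpen : IsOpen D) (hConv : Convex ℝ D)
    (hM : D ⊆ closedBall 0 M)
    (hsph : (sphere (0 : EuclideanSpace ℝ (Fin n)) 1).Nonempty) (hp : p ∈ D)
    (hcl : p ∈ closure {q | q ∈ D ∧ r ≤ inacc D q}) : r ≤ inacc D p := by
  rcases le_or_gt r 0 with hr | hr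
  · exact hr.trans inacc_nonneg
  obtain ⟨δ, hδ0, hball⟩ := Metric.isOpen_iff.1 hOpen p hp
  obtain ⟨q, hqmem, hqlim⟩ := mem_closure_iff_seq_limit.1 hcl
  refine le_of_forall_pos_le_add fun ε hε => ?_
  set η := min (δ/2) (ε * δ / (2 * r)) with hη
  have hη0 : 0 < η := lt_min (by linarith) (by positivity)
  obtain ⟨k, hk⟩ := (Metric.tendsto_atTop.1 hqlim) η hη0
  have hdk := hk k le_rfl
  rcases eq_or_ne (q k) p with heq | hne
  · have := (hqmem k).2
    rw [heq] at this
    linarith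
  have hdk0 : 0 < dist p (q k) := by
    rw [dist_comm]; exact dist_pos.2 hne
  set dk := dist p (q k) with hdkdef
  set c := (δ/2) / dk with hc
  have hc0 : 0 < c := by positivity
  set p'' := p + c • (p - q k) with hp''def
  have hdist : dist p'' p = δ/2 := by
    rw [dist_eq_norm]
    have : p'' - p = c • (p - q k) := by rw [hp''def]; abel
    rw [this, norm_smul, Real.norm_eq_abs, abs_of_pos hc0]
    rw [show ‖p - q k‖ = dk from by rw [hdkdef, dist_eq_norm]]
    rw [hc]
    field_simp
  have hb'' : ball p'' (δ/2) ⊆ D := by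
    intro x hx
    apply hball
    rw [mem_ball] at hx ⊢
    calc dist x p ≤ dist x p'' + dist p'' p := dist_triangle _ _ _
      _ < δ/2 + δ/2 := by rw [hdist]; linarith
      _ = δ := by ring
  have hp''D : p'' ∈ D := hb'' (mem_ball_self (by linarith))
  have hinacc'' : δ/2 ≤ inacc D p'' := inacc_ge_of_ball hOpen hConv hp''D hM hsph hb''
    (by linarith)
  set lam := (δ/2) / (dk + δ/2) with hlam
  have hlam0 : 0 < lam := by positivity
  have hlam1 : lam ≤ 1 := by
    rw [hlam, div_le_one (by positivity)]; linarith
  have hdkne : dk ≠ 0 := ne_of_gt hdk0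
  have hsne : dk + δ/2 ≠ 0 := by positivity
  have hcombo : p = lam • (q k) + (1 - lam) • p'' := by
    rw [hp''def, hlam, hc]
    match_scalars <;> field_simp <;> ring
  have hineq : lam * inacc D (q k) + (1 - lam) * inacc D p'' ≤ inacc D p := by
    have := inacc_combo (a := lam) (b := 1 - lam) hOpen hConv (hqmem k).1 hp''D hM hsph
      hlam0.le (by linarith) (by ring)
    rwa [← hcombo] at this
  have h1 : lam * r ≤ lam * inacc D (q k) := by
    have := (hqmem k).2
    nlinarith
  have h2 : 0 ≤ (1 - lam) * inacc D p'' := by nlinarith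
  have h3 : (1 - lam) * r < ε := by
    have hlamval : 1 - lam = dk / (dk + δ/2) := by
      rw [hlam]; field_simp; ring
    have hub : 1 - lam ≤ 2 * dk / δ := by
      rw [hlamval, div_le_div_iff₀ (by positivity) (by positivity)]
      nlinarith
    have hdkb : dk < ε * δ / (2 * r) := by
      rw [hdkdef, dist_comm]
      exact lt_of_lt_of_le hdk (min_le_right _ _)
    have hfin : (2 * dk / δ) * r < ε := by
      rw [div_mul_eq_mul_div, div_lt_iff₀ hδ0]
      rw [lt_div_iff₀ (by positivity : (0:ℝ) < 2 * r)] at hdkb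
      nlinarith
    calc (1 - lam) * r ≤ (2 * dk / δ) * r := by nlinarith
      _ < ε := hfin
  nlinarith

variable {r r' : ℝ}

theorem Eset_subset_closure : Eset D r ⊆ closure D :=
  closure_mono fun q hq => hq.1

theorem Eset_antitone (h : r ≤ r') : Eset D r' ⊆ Eset D r :=
  closure_mono fun q hq => ⟨hq.1, h.trans hq.2⟩

theorem Eset_closed : IsClosed (Eset D r) := isClosed_closure

theorem Eset_compact (hBdd : Bornology.IsBounded D) : IsCompact (Eset D r) :=
  isCompact_of_isClosed_isBounded Eset_closed
    (hBdd.closure.subset (Eset_subset_closure))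

theorem Eset_convex (hOpen : IsOpen D) (hConv : Convex ℝ D) (hM : D ⊆ closedBall 0 M)
    (hsph : (sphere (0 : EuclideanSpace ℝ (Fin n)) 1).Nonempty) :
    Convex ℝ (Eset D r) := by
  apply Convex.closure
  intro x hx y hy a b ha hb hab
  refine ⟨hConv hx.1 hy.1 ha hb hab, ?_⟩
  have := inacc_combo (a := a) (b := b) hOpen hConv hx.1 hy.1 hM hsph ha hb hab
  have h1 : a * r ≤ a * inacc D x := mul_le_mul_of_nonneg_left hx.2 ha
  have h2 : b * r ≤ b * inacc D y := mul_le_mul_of_nonneg_left hy.2 hb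
  have h3 : a * r + b * r = r := by rw [← add_mul, hab, one_mul]
  linarith

theorem inacc_le_bound' (hOpen : IsOpen D) (hConv : Convex ℝ D) (hp : p ∈ D)
    (hM : D ⊆ closedBall 0 M) (hM0 : 0 ≤ M) : inacc D p ≤ 2 * (M + M) := by
  rcases Set.eq_empty_or_nonempty (sphere (0 : EuclideanSpace ℝ (Fin n)) 1) with h | h
  · rw [inacc, h, Set.image_empty, Real.sInf_empty]
    linarith
  · exact inacc_le_bound hOpen hConv hp hM h

theorem Rmax_bddAbove (hOpen : IsOpen D) (hConv : Convex ℝ D) (hM : D ⊆ closedBall 0 M)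
    (hM0 : 0 ≤ M) : BddAbove (inacc D '' D) :=
  ⟨2 * (M + M), by rintro x ⟨q, hq, rfl⟩; exact inacc_le_bound' hOpen hConv hq hM hM0⟩

theorem Eset_nonempty (hOpen : IsOpen D) (hConv : Convex ℝ D) (hNe : D.Nonempty)
    (hM : D ⊆ closedBall 0 M) (hM0 : 0 ≤ M) (h : r < Rmax D) : (Eset D r).Nonempty := by
  obtain ⟨x, hx, hxlt⟩ := exists_lt_of_lt_csSup (hNe.image (inacc D)) h
  obtain ⟨q, hq, rfl⟩ := hx
  exact ⟨q, subset_closure ⟨hq, hxlt.le⟩⟩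

theorem exists_M (hBdd : Bornology.IsBounded D) : ∃ M : ℝ, 0 ≤ M ∧ D ⊆ closedBall 0 M := by
  obtain ⟨M0, hM0⟩ := hBdd.subset_closedBall 0
  exact ⟨max M0 0, le_max_right _ _,
    hM0.trans (closedBall_subset_closedBall (le_max_left _ _))⟩

theorem maxInacc_nonempty (hOpen : IsOpen D) (hConv : Convex ℝ D) (hNe : D.Nonempty)
    (hBdd : Bornology.IsBounded D) : (maxInaccSet D).Nonempty := by
  obtain ⟨M, hM0, hM⟩ := exists_M hBdd
  have hι : Nonempty (Set.Iio (Rmax D)) := ⟨⟨Rmax D - 1, by simp⟩⟩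
  rw [maxInaccSet, Set.biInter_eq_iInter]
  apply IsCompact.nonempty_iInter_of_directed_nonempty_isCompact_isClosed
  · rintro ⟨i, hi⟩ ⟨j, hj⟩
    refine ⟨⟨max i j, ?_⟩, Eset_antitone (le_max_left _ _), Eset_antitone (le_max_right _ _)⟩
    simp only [Set.mem_Iio] at *
    exact max_lt hi hj
  · rintro ⟨i, hi⟩
    exact Eset_nonempty hOpen hConv hNe hM hM0 hi
  · rintro ⟨i, hi⟩
    exact Eset_compact hBdd
  · rintro ⟨i, hi⟩
    exact Eset_closed

theorem maxInacc_closed : IsClosed (maxInaccSet D) :=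
  isClosed_biInter fun r _ => Eset_closed

theorem maxInacc_subset_closure (hNe : D.Nonempty) (hBdd : Bornology.IsBounded D) :
    maxInaccSet D ⊆ closure D := by
  refine Set.Subset.trans ?_ (Eset_subset_closure (r := Rmax D - 1))
  exact Set.biInter_subset_of_mem (by simp)

theorem maxInacc_convex (hOpen : IsOpen D) (hConv : Convex ℝ D) (hM : D ⊆ closedBall 0 M)
    (hsph : (sphere (0 : EuclideanSpace ℝ (Fin n)) 1).Nonempty) :
    Convex ℝ (maxInaccSet D) :=
  convex_iInter₂ fun _ _ => Eset_convex hOpen hConv hM hsph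

theorem chordEnd_mem_closure {t : ℝ} (ht : t ∈ closure (chord D p v)) :
    p + t • v ∈ closure D := by
  have hg : Continuous fun s : ℝ => p + s • v :=
    continuous_const.add (continuous_id.smul continuous_const)
  have himg : (fun s : ℝ => p + s • v) '' closure (chord D p v) ⊆ closure D :=
    (image_closure_subset_closure_image hg).trans (closure_mono (by rintro x ⟨s, hs, rfl⟩; exact hs))
  exact himg ⟨t, ht, rfl⟩

theorem Rmax_pos (hOpen : IsOpen D) (hConv : Convex ℝ D) (hNe : D.Nonempty)
    (hM : D ⊆ closedBall 0 M) (hM0 : 0 ≤ M)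
    (hsph : (sphere (0 : EuclideanSpace ℝ (Fin n)) 1).Nonempty) : 0 < Rmax D := by
  obtain ⟨q, hq⟩ := hNe
  obtain ⟨ε, hε, hball⟩ := Metric.isOpen_iff.1 hOpen q hq
  have h1 : ε ≤ inacc D q := inacc_ge_of_ball hOpen hConv hq hM hsph hball hε
  have h2 : inacc D q ≤ Rmax D :=
    le_csSup (Rmax_bddAbove hOpen hConv hM hM0) (Set.mem_image_of_mem _ hq)
  linarith

theorem maxInacc_subset (hOpen : IsOpen D) (hConv : Convex ℝ D) (hNe : D.Nonempty)
    (hBdd : Bornology.IsBounded D)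
    (hStrict : ∀ x ∈ frontier D, ∀ y ∈ frontier D, segment ℝ x y ⊆ frontier D → x = y)
    (hn : 2 ≤ n) : maxInaccSet D ⊆ D := by
  obtain ⟨M, hM0, hM⟩ := exists_M hBdd
  have hsph := sphere_nonempty_of_pos (n := n) (by omega)
  have hR : 0 < Rmax D := Rmax_pos hOpen hConv hNe hM hM0 hsph
  intro x hx
  by_contra hxD
  obtain ⟨φ, hφ⟩ := geometric_hahn_banach_open_point hConv hOpen hxD
  -- find a unit vector in the kernel of φ
  obtain ⟨u, hu1, hu0⟩ : ∃ u : EuclideanSpace ℝ (Fin n), ‖u‖ = 1 ∧ φ u = 0 := by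
    set ψ : EuclideanSpace ℝ (Fin n) →ₗ[ℝ] ℝ := (φ : EuclideanSpace ℝ (Fin n) →ₗ[ℝ] ℝ)
    have hrk := LinearMap.finrank_range_add_finrank_ker ψ
    have hdim : Module.finrank ℝ (EuclideanSpace ℝ (Fin n)) = n := finrank_euclideanSpace_fin
    have hrange : Module.finrank ℝ (LinearMap.range ψ) ≤ 1 := by
      have := Submodule.finrank_le (LinearMap.range ψ)
      simpa using this
    have hker : 0 < Module.finrank ℝ (LinearMap.ker ψ) := by omega
    obtain ⟨⟨u0, hu0mem⟩, hu0ne⟩ := Module.finrank_pos_iff_exists_ne_zero.1 hker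
    have hu0ne' : u0 ≠ 0 := fun h => hu0ne (by simp [h])
    refine ⟨‖u0‖⁻¹ • u0, ?_, ?_⟩
    · rw [norm_smul, Real.norm_eq_abs, abs_of_nonneg (by positivity),
        inv_mul_cancel₀ (norm_ne_zero_iff.2 hu0ne')]
    · have h0 : ψ u0 = 0 := hu0mem
      have : φ (‖u0‖⁻¹ • u0) = ‖u0‖⁻¹ • φ u0 := φ.map_smul _ _
      rw [this, show φ u0 = ψ u0 from rfl, h0, smul_zero]
  have husph : u ∈ sphere (0 : EuclideanSpace ℝ (Fin n)) 1 := by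
    simpa using hu1
  set r0 := Rmax D / 2 with hr0
  have hr0pos : 0 < r0 := by simp only [hr0]; linarith
  have hxE : x ∈ Eset D r0 := by
    have := Set.mem_iInter₂.1 hx r0 (by simp only [Set.mem_Iio, hr0]; linarith)
    exact this
  obtain ⟨q, hq, hqlim⟩ := mem_closure_iff_seq_limit.1 hxE
  set a : ℕ → ℝ := fun k => sInf (chord D (q k) u) with hadef
  set b : ℕ → ℝ := fun k => sSup (chord D (q k) u) with hbdef
  have hqD : ∀ k, q k ∈ D := fun k => (hq k).1
  have hab : ∀ k, r0 ≤ b k - a k := by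
    intro k
    have h1 : r0 ≤ inacc D (q k) := (hq k).2
    have h2 : inacc D (q k) ≤ segLen D (q k) u := inacc_le_segLen husph
    have h3 := segLen_eq hOpen hConv (hqD k) hM hu1
    simp only [hadef, hbdef]
    linarith
  have hnormq : ∀ k, ‖q k‖ ≤ M := by
    intro k
    simpa [dist_eq_norm] using hM (hqD k)
  have hchordIcc : ∀ k, chord D (q k) u ⊆ Set.Icc (-(2*M)) (2*M) := by
    intro k
    refine (chord_subset_Icc hM hu1).trans ?_
    apply Set.Icc_subset_Icc <;> [skip; skip] <;> (have := hnormq k; linarith)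
  have haIcc : ∀ k, a k ∈ Set.Icc (-(2*M)) (2*M) := by
    intro k
    constructor
    · exact le_csInf (chord_nonempty (hqD k)) fun t ht => (hchordIcc k ht).1
    · refine (sInf_le_csSup_chord (hqD k) hM hu1).trans ?_
      exact csSup_le (chord_nonempty (hqD k)) fun t ht => (hchordIcc k ht).2
  have hbIcc : ∀ k, b k ∈ Set.Icc (-(2*M)) (2*M) := by
    intro k
    constructor
    · refine le_trans ?_ (sInf_le_csSup_chord (hqD k) hM hu1)
      exact le_csInf (chord_nonempty (hqD k)) fun t ht => (hchordIcc k ht).1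
    · exact csSup_le (chord_nonempty (hqD k)) fun t ht => (hchordIcc k ht).2
  obtain ⟨α, -, σ1, hσ1, hconva⟩ := (isCompact_Icc (a := -(2*M)) (b := 2*M)).tendsto_subseq haIcc
  obtain ⟨β, -, σ2, hσ2, hconvb⟩ :=
    (isCompact_Icc (a := -(2*M)) (b := 2*M)).tendsto_subseq (fun k => hbIcc (σ1 k))
  set σ := σ1 ∘ σ2 with hσdef
  have hσ : StrictMono σ := hσ1.comp hσ2
  have ha' : Filter.Tendsto (fun k => a (σ k)) Filter.atTop (nhds α) :=
    hconva.comp hσ2.tendsto_atTop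
  have hb' : Filter.Tendsto (fun k => b (σ k)) Filter.atTop (nhds β) := hconvb
  have hq' : Filter.Tendsto (fun k => q (σ k)) Filter.atTop (nhds x) :=
    hqlim.comp hσ.tendsto_atTop
  have hβα : r0 ≤ β - α := by
    have hsub : Filter.Tendsto (fun k => b (σ k) - a (σ k)) Filter.atTop (nhds (β - α)) :=
      hb'.sub ha'
    exact ge_of_tendsto hsub (Filter.Eventually.of_forall fun k => hab (σ k))
  set A := x + α • u with hA
  set B := x + β • u with hB
  have hmemA : A ∈ closure D := by
    have htend : Filter.Tendsto (fun k => q (σ k) + a (σ k) • u) Filter.atTop (nhds A) :=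
      hq'.add (ha'.smul_const u)
    refine isClosed_closure.mem_of_tendsto htend (Filter.Eventually.of_forall fun k => ?_)
    exact chordEnd_mem_closure
      (csInf_mem_closure (chord_nonempty (hqD (σ k))) (chord_bddBelow hM hu1))
  have hmemB : B ∈ closure D := by
    have htend : Filter.Tendsto (fun k => q (σ k) + b (σ k) • u) Filter.atTop (nhds B) :=
      hq'.add (hb'.smul_const u)
    refine isClosed_closure.mem_of_tendsto htend (Filter.Eventually.of_forall fun k => ?_)
    exact chordEnd_mem_closure
      (csSup_mem_closure (chord_nonempty (hqD (σ k))) (chord_bddAbove hM hu1))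
  have hphi : ∀ s : ℝ, φ (x + s • u) = φ x := by
    intro s
    rw [map_add, φ.map_smul, hu0, smul_zero, add_zero]
  have hseg : segment ℝ A B ⊆ frontier D := by
    intro y hy
    obtain ⟨c1, c2, hc1, hc2, hsum, rfl⟩ := hy
    have hyform : c1 • A + c2 • B = x + (c1 * α + c2 * β) • u := by
      rw [hA, hB]
      match_scalars <;> simp [hsum] <;> ring
    have hycl : c1 • A + c2 • B ∈ closure D := hConv.closure hmemA hmemB hc1 hc2 hsum
    have hynotD : c1 • A + c2 • B ∉ D := by
      intro hyD
      have := hφ _ hyD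
      rw [hyform, hphi] at this
      exact lt_irrefl _ this
    rw [frontier, hOpen.interior_eq]
    exact ⟨hycl, hynotD⟩
  have hAB : A = B :=
    hStrict A (hseg (left_mem_segment ℝ A B)) B (hseg (right_mem_segment ℝ A B)) hseg
  have : (β - α) • u = 0 := by
    have h := hAB
    rw [hA, hB] at h
    have : α • u = β • u := by
      have := add_left_cancel h
      exact this
    rw [sub_smul, this, sub_self]
  rcases smul_eq_zero.1 this with h | h
  · have : β - α = 0 := h
    linarith
  · rw [h, norm_zero] at hu1
    norm_num at hu1

theorem inacc_eq_Rmax_of_mem (hOpen : IsOpen D) (hConv : Convex ℝ D)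
    (hM : D ⊆ closedBall 0 M) (hM0 : 0 ≤ M)
    (hsph : (sphere (0 : EuclideanSpace ℝ (Fin n)) 1).Nonempty)
    (hx : p ∈ maxInaccSet D) (hpD : p ∈ D) : inacc D p = Rmax D := by
  have hle : inacc D p ≤ Rmax D :=
    le_csSup (Rmax_bddAbove hOpen hConv hM hM0) (Set.mem_image_of_mem _ hpD)
  refine le_antisymm hle ?_
  by_contra hcon
  push_neg at hcon
  set r := (inacc D p + Rmax D) / 2 with hr
  have hr1 : r < Rmax D := by simp only [hr]; linarith
  have hr2 : inacc D p < r := by simp only [hr]; linarith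
  have hmem : p ∈ Eset D r := Set.mem_iInter₂.1 hx r hr1
  have := inacc_ge_closure hOpen hConv hM hsph hpD hmem
  linarith

set_option maxHeartbeats 2000000 in
theorem maxInacc_collinear (hOpen : IsOpen D) (hConv : Convex ℝ D) (hNe : D.Nonempty)
    (hBdd : Bornology.IsBounded D)
    (hStrict : ∀ x ∈ frontier D, ∀ y ∈ frontier D, segment ℝ x y ⊆ frontier D → x = y)
    (hn : 2 ≤ n) {u w z : EuclideanSpace ℝ (Fin n)} (hu : u ∈ maxInaccSet D)
    (hw : w ∈ maxInaccSet D) (hz : z ∈ maxInaccSet D) (hne : w - u ≠ 0) :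
    ∃ t : ℝ, z - u = t • (w - u) := by
  obtain ⟨M, hM0, hM⟩ := exists_M hBdd
  have hsph := sphere_nonempty_of_pos (n := n) (by omega)
  have hIsub : maxInaccSet D ⊆ D := maxInacc_subset hOpen hConv hNe hBdd hStrict hn
  have hIconv : Convex ℝ (maxInaccSet D) := maxInacc_convex hOpen hConv hM hsph
  have hinaccI : ∀ y ∈ maxInaccSet D, inacc D y = Rmax D := fun y hy =>
    inacc_eq_Rmax_of_mem hOpen hConv hM hM0 hsph hy (hIsub hy)
  have hgR : ∀ y ∈ maxInaccSet D, ∀ v' ∈ sphere (0 : EuclideanSpace ℝ (Fin n)) 1,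
      Rmax D ≤ segLen D y v' := by
    intro y hy v' hv'
    rw [← hinaccI y hy]
    exact inacc_le_segLen hv'
  by_contra hcol
  push_neg at hcol
  have Hind : ∀ γ1 γ2 : ℝ, γ1 • (w - u) + γ2 • (z - u) = 0 → γ1 = 0 ∧ γ2 = 0 := by
    intro γ1 γ2 h
    by_cases hγ2 : γ2 = 0
    · subst hγ2
      rw [zero_smul, add_zero] at h
      rcases smul_eq_zero.1 h with h' | h'
      · exact ⟨h', rfl⟩
      · exact absurd h' hne
    · exfalso
      apply hcol (-γ1 / γ2)
      have h1 : γ2 • (z - u) = (-γ1) • (w - u) := by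
        rw [neg_smul, ← sub_eq_zero, sub_neg_eq_add, add_comm]
        exact h
      have h2 : z - u = (γ2⁻¹ * (-γ1)) • (w - u) := by
        rw [mul_smul, ← h1, inv_smul_smul₀ hγ2]
      rw [h2]
      congr 1
      field_simp
  obtain ⟨p, hpdef⟩ : ∃ p : EuclideanSpace ℝ (Fin n),
      p = u + (3⁻¹ : ℝ) • ((w - u) + (z - u)) := ⟨_, rfl⟩
  have hmid : ((2:ℝ)⁻¹) • w + ((2:ℝ)⁻¹) • z ∈ maxInaccSet D :=
    hIconv hw hz (by norm_num) (by norm_num) (by norm_num)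
  have hpI : p ∈ maxInaccSet D := by
    have h3 : p = (3⁻¹ : ℝ) • u + (1 - 3⁻¹ : ℝ) • (((2:ℝ)⁻¹) • w + ((2:ℝ)⁻¹) • z) := by
      rw [hpdef]
      match_scalars <;> norm_num
    rw [h3]
    exact hIconv hu hmid (by norm_num) (by norm_num) (by norm_num)
  have hpD : p ∈ D := hIsub hpI
  obtain ⟨v, hv, hveq⟩ := exists_min_dir hOpen hConv hpD hM (by omega)
  have hv1 : ‖v‖ = 1 := norm_of_mem_sphere hv
  have hgp : segLen D p v = Rmax D := by rw [hveq, hinaccI p hpI]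
  have hnotboth : ¬((∃ c : ℝ, w - p = c • v) ∧ (∃ c : ℝ, z - p = c • v)) := by
    rintro ⟨⟨c1, hc1⟩, ⟨c2, hc2⟩⟩
    have hkey : ((2*c2+c1)/3) • (w-u) + (-((c2+2*c1)/3)) • (z-u) = 0 := by
      have h1 : c2 • (w - p) - c1 • (z - p) = (0:ℝ) • v := by
        rw [hc1, hc2]
        match_scalars
        ring
      have h2 : c2 • (w - p) - c1 • (z - p)
          = ((2*c2+c1)/3) • (w-u) + (-((c2+2*c1)/3)) • (z-u) := by
        rw [hpdef]
        match_scalars <;> ring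
      rw [← h2, h1, zero_smul]
    obtain ⟨hA, hB⟩ := Hind _ _ hkey
    have e1 : 2*c2 + c1 = 0 := by
      field_simp at hA
      linarith
    have e2 : c2 + 2*c1 = 0 := by
      field_simp at hB
      linarith
    have hc10 : c1 = 0 := by linarith
    have hw0 : w - p = 0 := by rw [hc1, hc10, zero_smul]
    have hwp2 : w - p = (2/3 : ℝ) • (w-u) + (-(1/3) : ℝ) • (z-u) := by
      rw [hpdef]
      match_scalars <;> ring
    have hcontr : (2/3 : ℝ) • (w-u) + (-(1/3) : ℝ) • (z-u) = 0 := by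
      rw [← hwp2]
      exact hw0
    have := (Hind _ _ hcontr).1
    norm_num at this
  -- choose the vertex x (one of w, z) not parallel to v, and z' the midpoint of
  -- the two other vertices
  obtain ⟨x, z', hxI, hz'I, hcomb, hxnp⟩ :
      ∃ x z' : EuclideanSpace ℝ (Fin n), x ∈ maxInaccSet D ∧ z' ∈ maxInaccSet D ∧
        p = (3⁻¹ : ℝ) • x + (1 - 3⁻¹ : ℝ) • z' ∧ ∀ c : ℝ, x - p ≠ c • v := by
    by_cases hpar : ∃ c : ℝ, w - p = c • v
    · refine ⟨z, ((2:ℝ)⁻¹) • u + ((2:ℝ)⁻¹) • w, hz,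
        hIconv hu hw (by norm_num) (by norm_num) (by norm_num), ?_, ?_⟩
      · rw [hpdef]; match_scalars <;> norm_num
      · intro c hc
        exact hnotboth ⟨hpar, ⟨c, hc⟩⟩
    · refine ⟨w, ((2:ℝ)⁻¹) • u + ((2:ℝ)⁻¹) • z, hw,
        hIconv hu hz (by norm_num) (by norm_num) (by norm_num), ?_, ?_⟩
      · rw [hpdef]; match_scalars <;> norm_num
      · intro c hc
        exact hpar ⟨c, hc⟩
  have hxD : x ∈ D := hIsub hxI
  have hz'D : z' ∈ D := hIsub hz'I
  -- the chord length in direction v is constantly R on the segment [x, p]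
  have hgseg : ∀ s : ℝ, 0 ≤ s → s ≤ 1 → segLen D (s • x + (1-s) • p) v = Rmax D := by
    intro s hs0 hs1
    have hyI : s • x + (1-s) • p ∈ maxInaccSet D :=
      hIconv hxI hpI hs0 (by linarith) (by ring)
    have hyD : s • x + (1-s) • p ∈ D := hIsub hyI
    have hge : Rmax D ≤ segLen D (s • x + (1-s) • p) v := hgR _ hyI v hv
    rcases eq_or_lt_of_le hs0 with hs0' | hs0'
    · have hyp : s • x + (1-s) • p = p := by
        rw [← hs0']
        match_scalars <;> norm_num
      rw [hyp, hgp]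
    · -- s > 0 : write p as a convex combination of y and z'
      set lam := 1 / (2*s+1) with hlam
      have h2s1 : (0:ℝ) < 2*s+1 := by linarith
      have hlam0 : 0 < lam := by positivity
      have hlam1 : lam ≤ 1 := by
        rw [hlam, div_le_one h2s1]; linarith
      have hpcomb : p = lam • (s • x + (1-s) • p) + (1 - lam) • z' := by
        have hz'val : z' = (3/2 : ℝ) • p - (2⁻¹ : ℝ) • x := by
          rw [hcomb]
          match_scalars <;> norm_num
        rw [hz'val, hlam]
        match_scalars <;> field_simp <;> ring
      have hcc := segLen_combo (a := lam) (b := 1 - lam) hOpen hConv hyD hz'D hM hv1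
        hlam0.le (by linarith) (by ring)
      rw [← hpcomb, hgp] at hcc
      have hgz' : Rmax D ≤ segLen D z' v := hgR _ hz'I v hv
      nlinarith
  -- the lower endpoint function is affine along the segment
  have hbnd : ∀ y ∈ D, segLen D y v = sSup (chord D y v) - sInf (chord D y v) :=
    fun y hy => segLen_eq hOpen hConv hy hM hv1
  have haff : ∀ s : ℝ, 0 ≤ s → s ≤ 1 →
      sInf (chord D (s • x + (1-s) • p) v)
        = s * sInf (chord D x v) + (1-s) * sInf (chord D p v) := by
    intro s hs0 hs1
    have hyD : s • x + (1-s) • p ∈ D :=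
      hIsub (hIconv hxI hpI hs0 (by linarith) (by ring))
    have hle := csInf_chord_combo (a := s) (b := 1-s) hConv hxD hpD hM hv1 hs0
      (by linarith) (by ring)
    have hge := csSup_chord_combo (a := s) (b := 1-s) hConv hxD hpD hM hv1 hs0
      (by linarith) (by ring)
    have hx1 : segLen D x v = Rmax D := by
      have := hgseg 1 (by norm_num) le_rfl
      rw [show (1:ℝ) • x + (1-1 : ℝ) • p = x by match_scalars <;> norm_num] at this
      exact this
    have hys : segLen D (s • x + (1-s) • p) v = Rmax D := hgseg s hs0 hs1
    rw [hbnd x hxD] at hx1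
    rw [hbnd p hpD] at hgp
    rw [hbnd _ hyD] at hys
    nlinarith
  -- hence the curve of lower endpoints is a segment inside the frontier
  have hAeq : ∀ s : ℝ, 0 ≤ s → s ≤ 1 →
      (s • x + (1-s) • p) + (sInf (chord D (s • x + (1-s) • p) v)) • v
        = s • (x + (sInf (chord D x v)) • v) + (1-s) • (p + (sInf (chord D p v)) • v) := by
    intro s hs0 hs1
    rw [haff s hs0 hs1]
    match_scalars <;> ring
  have hsegsub : segment ℝ (x + (sInf (chord D x v)) • v) (p + (sInf (chord D p v)) • v)
      ⊆ frontier D := by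
    intro y hy
    obtain ⟨c1, c2, hc1, hc2, hsum, rfl⟩ := hy
    have hc2' : c2 = 1 - c1 := by linarith
    subst hc2'
    rw [← hAeq c1 hc1 (by linarith)]
    exact chordEnd_inf_mem_frontier hOpen hConv
      (hIsub (hIconv hxI hpI hc1 (by linarith) (by ring))) hM hv1
  have hABeq : x + (sInf (chord D x v)) • v = p + (sInf (chord D p v)) • v :=
    hStrict _ (hsegsub (left_mem_segment ℝ _ _)) _ (hsegsub (right_mem_segment ℝ _ _)) hsegsub
  apply hxnp (sInf (chord D p v) - sInf (chord D x v))
  have hfin : x - p = (sInf (chord D p v)) • v - (sInf (chord D x v)) • v := by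
    calc x - p = (x + sInf (chord D x v) • v) - p - sInf (chord D x v) • v := by abel
      _ = (p + sInf (chord D p v) • v) - p - sInf (chord D x v) • v := by rw [hABeq]
      _ = sInf (chord D p v) • v - sInf (chord D x v) • v := by abel
  rw [sub_smul]
  exact hfin

theorem low_dim_collinear (hn : n ≤ 1) {u w y : EuclideanSpace ℝ (Fin n)}
    (hne : w - u ≠ 0) : ∃ t : ℝ, y - u = t • (w - u) := by
  rcases Nat.lt_or_ge n 1 with h0 | h1
  · exfalso
    have hn0 : n = 0 := by omega
    subst hn0
    exact hne (Subsingleton.elim _ _)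
  · have hn1 : n = 1 := by omega
    subst hn1
    have hfr : Module.finrank ℝ (EuclideanSpace ℝ (Fin 1)) = 1 := finrank_euclideanSpace_fin
    obtain ⟨t, ht⟩ := (finrank_eq_one_iff_of_nonzero' (w - u) hne).1 hfr (y - u)
    exact ⟨t, ht.symm⟩

end MaxInacc

/-- for a bounded strictly convex domain `D ⊂ ℝⁿ`, the set `I_D` of
points of maximum inaccessibility is either a single point or a nondegenerate closed
segment. -/
theorem maxInaccSet_point_or_segment {n : ℕ} (D : Set (EuclideanSpace ℝ (Fin n)))
    (hOpen : IsOpen D) (hNe : D.Nonempty) (hBdd : Bornology.IsBounded D)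
    (hConv : Convex ℝ D)
    (hStrict : ∀ x ∈ frontier D, ∀ y ∈ frontier D, segment ℝ x y ⊆ frontier D → x = y) :
    (∃ p : EuclideanSpace ℝ (Fin n), maxInaccSet D = {p}) ∨
    (∃ P Q : EuclideanSpace ℝ (Fin n), P ≠ Q ∧ maxInaccSet D = segment ℝ P Q) := by
  classical
  obtain ⟨M, hM0, hM⟩ := MaxInacc.exists_M hBdd
  obtain ⟨p0, hp0⟩ := MaxInacc.maxInacc_nonempty hOpen hConv hNe hBdd
  by_cases hsing : ∀ a ∈ maxInaccSet D, ∀ b ∈ maxInaccSet D, a = b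
  · left
    exact ⟨p0, Set.eq_singleton_iff_unique_mem.2 ⟨hp0, fun y hy => hsing y hy p0 hp0⟩⟩
  · right
    push_neg at hsing
    obtain ⟨u, hu, w, hw, huw⟩ := hsing
    have hne0 : w - u ≠ 0 := fun h => huw (sub_eq_zero.1 h).symm
    have hcol : ∀ y ∈ maxInaccSet D, ∃ t : ℝ, y - u = t • (w - u) := by
      intro y hy
      rcases le_or_gt n 1 with hn | hn
      · exact MaxInacc.low_dim_collinear hn hne0
      · exact MaxInacc.maxInacc_collinear hOpen hConv hNe hBdd hStrict hn hu hw hy hne0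
    set K : Set ℝ := {t | u + t • (w - u) ∈ maxInaccSet D} with hK
    have h0K : (0:ℝ) ∈ K := by
      show u + (0:ℝ) • (w - u) ∈ maxInaccSet D
      rw [zero_smul, add_zero]
      exact hu
    have h1K : (1:ℝ) ∈ K := by
      show u + (1:ℝ) • (w - u) ∈ maxInaccSet D
      rw [one_smul, add_sub_cancel]
      exact hw
    have hIconv : Convex ℝ (maxInaccSet D) := MaxInacc.maxInacc_convex hOpen hConv hM
      (by
        rcases Set.eq_empty_or_nonempty (sphere (0 : EuclideanSpace ℝ (Fin n)) 1) with h | h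
        · exfalso
          rcases Nat.eq_zero_or_pos n with h0 | h0
          · subst h0
            exact hne0 (Subsingleton.elim _ _)
          · exact (MaxInacc.sphere_nonempty_of_pos h0).ne_empty h
        · exact h)
    have hKconv : Convex ℝ K := by
      intro t1 h1 t2 h2 a b ha hb hab
      show u + (a • t1 + b • t2) • (w - u) ∈ maxInaccSet D
      have hkey : u + (a • t1 + b • t2) • (w - u)
          = a • (u + t1 • (w - u)) + b • (u + t2 • (w - u)) := by
        simp only [smul_eq_mul]
        match_scalars <;> (try simp [hab]) <;> (try linarith)
      rw [hkey]
      exact hIconv h1 h2 ha hb hab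
    have hKclosed : IsClosed K := by
      have hcont : Continuous fun t : ℝ => u + t • (w - u) :=
        continuous_const.add (continuous_id.smul continuous_const)
      exact MaxInacc.maxInacc_closed.preimage hcont
    have hIbdd : Bornology.IsBounded (maxInaccSet D) :=
      hBdd.closure.subset (MaxInacc.maxInacc_subset_closure hNe hBdd)
    obtain ⟨M', hM'0, hM'⟩ : ∃ M' : ℝ, 0 ≤ M' ∧ maxInaccSet D ⊆ closedBall 0 M' := by
      obtain ⟨M0, hM0'⟩ := hIbdd.subset_closedBall 0
      exact ⟨max M0 0, le_max_right _ _,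
        hM0'.trans (closedBall_subset_closedBall (le_max_left _ _))⟩
    have hKbdd : K ⊆ Set.Icc (-((M' + ‖u‖) / ‖w - u‖)) ((M' + ‖u‖) / ‖w - u‖) := by
      intro t ht
      have h1 : ‖u + t • (w - u)‖ ≤ M' := by
        simpa [dist_eq_norm] using hM' ht
      have h2 : |t| * ‖w - u‖ ≤ M' + ‖u‖ := by
        have : ‖t • (w - u)‖ ≤ ‖u + t • (w - u)‖ + ‖u‖ := by
          have h := norm_sub_le (u + t • (w - u)) u
          simpa using h
        rw [norm_smul, Real.norm_eq_abs] at this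
        linarith
      have hwu : 0 < ‖w - u‖ := norm_pos_iff.2 hne0
      have habs : |t| ≤ (M' + ‖u‖) / ‖w - u‖ := by
        rw [le_div_iff₀ hwu]
        exact h2
      exact abs_le.1 habs
    have hKcompact : IsCompact K :=
      isCompact_of_isClosed_isBounded hKclosed ((isBounded_Icc _ _).subset hKbdd)
    have hKne : K.Nonempty := ⟨0, h0K⟩
    have hcK : sInf K ∈ K := hKcompact.sInf_mem hKne
    have hdK : sSup K ∈ K := hKcompact.sSup_mem hKne
    have hc0 : sInf K ≤ 0 := csInf_le hKcompact.bddBelow h0K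
    have hd1 : (1:ℝ) ≤ sSup K := le_csSup hKcompact.bddAbove h1K
    have hcd : sInf K < sSup K := by linarith
    have hKIcc : K = Set.Icc (sInf K) (sSup K) := by
      apply Set.Subset.antisymm
      · intro t ht
        exact ⟨csInf_le hKcompact.bddBelow ht, le_csSup hKcompact.bddAbove ht⟩
      · intro t ht
        exact hKconv.ordConnected.out hcK hdK ht
    have hIimg : maxInaccSet D = (fun t : ℝ => u + t • (w - u)) '' Set.Icc (sInf K) (sSup K) := by
      rw [← hKIcc]
      apply Set.Subset.antisymm
      · intro y hy
        obtain ⟨t, hty⟩ := hcol y hy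
        have hyt : y = u + t • (w - u) := by
          rw [← hty]; abel
        refine ⟨t, ?_, hyt.symm⟩
        show u + t • (w - u) ∈ maxInaccSet D
        rw [← hyt]; exact hy
      · rintro y ⟨t, ht, rfl⟩
        exact ht
    refine ⟨u + (sInf K) • (w - u), u + (sSup K) • (w - u), ?_, ?_⟩
    · intro hPQ
      have : (sSup K - sInf K) • (w - u) = 0 := by
        have heq : (sSup K - sInf K) • (w - u)
            = (u + sSup K • (w - u)) - (u + sInf K • (w - u)) := by
          rw [sub_smul]; abel
        rw [heq, ← hPQ, sub_self]
      rcases smul_eq_zero.1 this with h | h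
      · have : sSup K - sInf K = 0 := h
        linarith
      · exact hne0 h
    · rw [hIimg, segment_eq_image']
      have himg : (fun θ : ℝ => sInf K + θ * (sSup K - sInf K)) '' Set.Icc 0 1
          = Set.Icc (sInf K) (sSup K) := by
        have h1 : (fun θ : ℝ => sInf K + θ * (sSup K - sInf K)) '' Set.Icc 0 1
            = (fun θ : ℝ => sInf K + θ • (sSup K - sInf K)) '' Set.Icc 0 1 := by
          simp [smul_eq_mul]
        rw [h1, ← segment_eq_image', segment_eq_Icc hcd.le]
      rw [← himg, ← Set.image_comp]
      apply Set.image_congr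
      intro θ hθ
      show u + (sInf K + θ * (sSup K - sInf K)) • (w - u)
        = u + sInf K • (w - u) + θ • (u + sSup K • (w - u) - (u + sInf K • (w - u)))
      match_scalars <;> ring
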